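/- arXiv:2108.11925 — 4 statements merged into one kernel-verified Lean document; each statement's English description precedes it below -/
import Mathlib

section
/- Let q > 0 and define φ(x) = cos²(πx/q) for |x| < q/2 and φ(x) = 0 otherwise. Then for all x with |x| < q, the convolution (φ*φ)(x) = ∫_ℝ φ(y)φ(x−y) dy equals (q−|x|)/4 · (1 + (1/2)cos(2πx/q)) + (3q)/(16π) · sin(2π|x|/q), and (φ*φ)(x) = 0 for |x| ≥ q. -/
open MeasureTheory Real

/-- The Hann window of width `q`. -/
noncomputable def hann (q x : ℝ) : ℝ := if |x| < q / 2 then Real.cos (Real.pi * x / q) ^ 2 else 0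

/-- Autoconvolution of the Hann window over `ℝ`. -/
noncomputable def hconv (q x : ℝ) : ℝ := ∫ y : ℝ, hann q y * hann q (x - y)

lemma trig_id (a b : ℝ) : Real.cos a ^ 2 * Real.cos b ^ 2 =
    (1 + Real.cos (2*a) + Real.cos (2*b) + Real.cos (2*a + 2*b)/2 + Real.cos (2*a - 2*b)/2)/4 := by
  rw [Real.cos_add, Real.cos_sub, Real.cos_two_mul, Real.cos_two_mul, Real.sin_two_mul,
    Real.sin_two_mul]
  ring

lemma trig_id2 (q : ℝ) (x y : ℝ) :
    Real.cos (π*y/q) ^ 2 * Real.cos (π*(x-y)/q) ^ 2 =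
    (1 + Real.cos (2*π*y/q) + Real.cos (2*π*(x-y)/q) + Real.cos (2*π*x/q)/2
      + Real.cos (2*π*(2*y-x)/q)/2)/4 := by
  have h := trig_id (π*y/q) (π*(x-y)/q)
  rw [show 2*(π*y/q) = 2*π*y/q by ring, show 2*(π*(x-y)/q) = 2*π*(x-y)/q by ring,
    show 2*π*y/q + 2*π*(x-y)/q = 2*π*x/q by ring,
    show 2*π*y/q - 2*π*(x-y)/q = 2*π*(2*y-x)/q by ring] at h
  exact h

/-- Antiderivative of the integrand. -/
noncomputable def hF (q x y : ℝ) : ℝ :=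
  (y + q/(2*π) * Real.sin (2*π*y/q) - q/(2*π) * Real.sin (2*π*(x-y)/q)
    + y * (Real.cos (2*π*x/q)/2) + q/(8*π) * Real.sin (2*π*(2*y-x)/q)) / 4

lemma hasDeriv_hF (q : ℝ) (hq : q ≠ 0) (x y : ℝ) :
    HasDerivAt (hF q x)
      (Real.cos (π*y/q) ^ 2 * Real.cos (π*(x-y)/q) ^ 2) y := by
  have hπ : π ≠ 0 := Real.pi_ne_zero
  have h1 : HasDerivAt (fun y : ℝ => 2*π*y/q) (2*π/q) y := by
    simpa using (((hasDerivAt_id y).const_mul (2*π)).div_const q)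
  have h2 : HasDerivAt (fun y : ℝ => 2*π*(x-y)/q) (-(2*π)/q) y := by
    have := (((hasDerivAt_const y x).sub (hasDerivAt_id y)).const_mul (2*π)).div_const q
    simpa using this
  have h3 : HasDerivAt (fun y : ℝ => 2*π*(2*y-x)/q) (2*(2*π/q)) y := by
    have := ((((hasDerivAt_id y).const_mul 2).sub_const x).const_mul (2*π)).div_const q
    apply this.congr_deriv
    field_simp
  have hs1 := (h1.sin.const_mul (q/(2*π)))
  have hs2 := (h2.sin.const_mul (q/(2*π)))
  have hs3 := (h3.sin.const_mul (q/(8*π)))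
  have H := ((((hasDerivAt_id y).add hs1).sub hs2).add
      ((hasDerivAt_id y).mul_const (Real.cos (2*π*x/q)/2))).add hs3
  have H4 := H.div_const 4
  apply H4.congr_deriv
  rw [trig_id2]
  field_simp
  ring

lemma eval_hF (q : ℝ) (hq : 0 < q) (x : ℝ) :
    hF q x (q/2) - hF q x (x - q/2) =
    (q - x) / 4 * (1 + Real.cos (2 * π * x / q) / 2)
      + 3 * q / (16 * π) * Real.sin (2 * π * x / q) := by
  have hπ : π ≠ 0 := Real.pi_ne_zero
  have hq' : q ≠ 0 := hq.ne'
  unfold hF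
  rw [show 2*π*(q/2)/q = π by field_simp,
    show 2*π*(x - q/2)/q = 2*π*x/q - π by field_simp,
    show 2*π*(2*(q/2) - x)/q = 2*π - 2*π*x/q by field_simp,
    show 2*π*(x - (x - q/2))/q = π by field_simp; ring,
    show 2*π*(2*(x - q/2) - x)/q = 2*π*x/q - 2*π by field_simp; ring]
  rw [Real.sin_pi, Real.sin_sub_pi, Real.sin_two_pi_sub,
    show Real.sin (2*π*x/q - 2*π) = -Real.sin (2*π - 2*π*x/q) by
      rw [← Real.sin_neg]; ring_nf,
    Real.sin_two_pi_sub]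
  field_simp
  ring

lemma hconv_eq_interval (q : ℝ) (hq : 0 < q) (x : ℝ) (hx0 : 0 ≤ x) (hxq : x ≤ q) :
    hconv q x = ∫ y in (x - q/2)..(q/2), Real.cos (π*y/q) ^ 2 * Real.cos (π*(x-y)/q) ^ 2 := by
  have hind : ∀ y : ℝ, hann q y * hann q (x - y) =
      (Set.Ioo (x - q/2) (q/2)).indicator
        (fun y => Real.cos (π*y/q) ^ 2 * Real.cos (π*(x-y)/q) ^ 2) y := by
    intro y
    by_cases h : x - q/2 < y ∧ y < q/2
    · rw [Set.indicator_of_mem (Set.mem_Ioo.2 h)]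
      simp only [hann]
      rw [if_pos (abs_lt.2 ⟨by linarith [h.1], h.2⟩),
        if_pos (abs_lt.2 ⟨by linarith [h.2], by linarith [h.1]⟩)]
    · rw [Set.indicator_of_notMem (by simpa [Set.mem_Ioo] using h)]
      simp only [hann]
      split_ifs with h1 h2
      · exact absurd ⟨by linarith [(abs_lt.1 h2).2], (abs_lt.1 h1).2⟩ h
      all_goals ring
  rw [hconv]
  simp_rw [hind]
  rw [MeasureTheory.integral_indicator measurableSet_Ioo,
    ← MeasureTheory.integral_Ioc_eq_integral_Ioo,
    ← intervalIntegral.integral_of_le (by linarith : x - q/2 ≤ q/2)]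

lemma hconv_key (q : ℝ) (hq : 0 < q) (x : ℝ) (hx0 : 0 ≤ x) (hxq : x < q) :
    hconv q x = (q - x) / 4 * (1 + Real.cos (2 * π * x / q) / 2)
      + 3 * q / (16 * π) * Real.sin (2 * π * x / q) := by
  rw [hconv_eq_interval q hq x hx0 hxq.le,
    intervalIntegral.integral_eq_sub_of_hasDerivAt
      (fun y _ => hasDeriv_hF q hq.ne' x y)
      ((Continuous.intervalIntegrable (by fun_prop) _ _))]
  exact eval_hF q hq x

lemma hann_neg (q y : ℝ) : hann q (-y) = hann q y := by
  unfold hann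
  rw [abs_neg, show π * -y / q = -(π*y/q) by ring, Real.cos_neg]

lemma hconv_neg (q x : ℝ) : hconv q (-x) = hconv q x := by
  unfold hconv
  rw [← MeasureTheory.integral_neg_eq_self (fun y => hann q y * hann q (-x - y)) volume]
  have h : ∀ y : ℝ, hann q (-y) * hann q (-x - -y) = hann q y * hann q (x - y) := by
    intro y
    rw [hann_neg, show -x - -y = -(x - y) by ring, hann_neg]
  simp_rw [h]

theorem hann_autoconv_formula (q : ℝ) (hq : 0 < q) (x : ℝ) :
    (|x| < q → hconv q x =
      (q - |x|) / 4 * (1 + Real.cos (2 * π * x / q) / 2)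
        + 3 * q / (16 * π) * Real.sin (2 * π * |x| / q)) ∧
    (q ≤ |x| → hconv q x = 0) := by
  constructor
  · intro hx
    rcases le_or_gt 0 x with hx0 | hx0
    · rw [abs_of_nonneg hx0]
      rw [abs_of_nonneg hx0] at hx
      exact hconv_key q hq x hx0 hx
    · have h2 := hconv_neg q (-x)
      rw [neg_neg] at h2
      rw [abs_of_neg hx0] at hx ⊢
      rw [h2, hconv_key q hq (-x) (by linarith) hx,
        show 2*π*(-x)/q = -(2*π*x/q) by ring, Real.cos_neg]
  · intro hx
    have hz : ∀ y : ℝ, hann q y * hann q (x - y) = 0 := by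
      intro y
      unfold hann
      split_ifs with h1 h2
      · exfalso
        have h := abs_add_le y (x - y)
        rw [show y + (x - y) = x by ring] at h
        linarith [abs_lt.1 h1, abs_lt.1 h2, (abs_lt.1 h1).1]
      all_goals ring
    unfold hconv
    simp_rw [hz]
    exact integral_zero _ _
end

section
/- Let q > 0, φ the Hann window of width q, and for t ∈ [q/2, q] the autoconvolution φ*φ is convex on [q/2, q]; i.e., (φ*φ)'' ≥ 0 on [q/2, q]. -/
open MeasureTheory Real

noncomputable def Fh (q x : ℝ) : ℝ :=
  (q - x)/4 + (q - x) * Real.cos (2*Real.pi*x/q) / 8 + (3*q/(16*Real.pi)) * Real.sin (2*Real.pi*x/q)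

noncomputable def F1h (q x : ℝ) : ℝ :=
  -(1/4) + Real.cos (2*Real.pi*x/q)/4 - (q - x) * (Real.pi/(4*q)) * Real.sin (2*Real.pi*x/q)

noncomputable def F2h (q x : ℝ) : ℝ :=
  -(Real.pi/(4*q)) * Real.sin (2*Real.pi*x/q)
    - (q - x) * (Real.pi^2/(2*q^2)) * Real.cos (2*Real.pi*x/q)

noncomputable def Ah (q x y : ℝ) : ℝ :=
  (1/4) * ( y + (q/(2*Real.pi)) * Real.sin (2*Real.pi*y/q)
    - (q/(2*Real.pi)) * Real.sin (2*Real.pi*(x-y)/q)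
    + (y/2) * Real.cos (2*Real.pi*x/q)
    + (q/(8*Real.pi)) * Real.sin (2*Real.pi*(2*y-x)/q) )

lemma hasDerivAt_inner (q x : ℝ) :
    HasDerivAt (fun x : ℝ => 2*Real.pi*x/q) (2*Real.pi/q) x := by
  simpa using ((hasDerivAt_id x).const_mul (2*Real.pi)).div_const q

lemma hasDerivAt_Fh (q : ℝ) (hq : q ≠ 0) (x : ℝ) : HasDerivAt (Fh q) (F1h q x) x := by
  have hi := hasDerivAt_inner q x
  have hc : HasDerivAt (fun x : ℝ => Real.cos (2*Real.pi*x/q))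
      (-Real.sin (2*Real.pi*x/q) * (2*Real.pi/q)) x := (Real.hasDerivAt_cos _).comp x hi
  have hs : HasDerivAt (fun x : ℝ => Real.sin (2*Real.pi*x/q))
      (Real.cos (2*Real.pi*x/q) * (2*Real.pi/q)) x := (Real.hasDerivAt_sin _).comp x hi
  have h1 : HasDerivAt (fun x : ℝ => (q - x)/4) (-(1/4)) x := by
    have := ((hasDerivAt_id x).const_sub q).div_const 4
    norm_num at this ⊢; exact this
  have h2 : HasDerivAt (fun x : ℝ => (q - x) * Real.cos (2*Real.pi*x/q) / 8)
      (((-1) * Real.cos (2*Real.pi*x/q) + (q - x) * (-Real.sin (2*Real.pi*x/q) * (2*Real.pi/q))) / 8) x := by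
    exact (((hasDerivAt_id x).const_sub q).mul hc).div_const 8
  have h3 : HasDerivAt (fun x : ℝ => (3*q/(16*Real.pi)) * Real.sin (2*Real.pi*x/q))
      ((3*q/(16*Real.pi)) * (Real.cos (2*Real.pi*x/q) * (2*Real.pi/q))) x := hs.const_mul _
  have := (h1.add h2).add h3
  refine this.congr_deriv ?_
  unfold F1h
  have hpi := Real.pi_ne_zero
  field_simp
  ring

lemma hasDerivAt_F1h (q : ℝ) (hq : q ≠ 0) (x : ℝ) : HasDerivAt (F1h q) (F2h q x) x := by
  have hi := hasDerivAt_inner q x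
  have hc : HasDerivAt (fun x : ℝ => Real.cos (2*Real.pi*x/q))
      (-Real.sin (2*Real.pi*x/q) * (2*Real.pi/q)) x := (Real.hasDerivAt_cos _).comp x hi
  have hs : HasDerivAt (fun x : ℝ => Real.sin (2*Real.pi*x/q))
      (Real.cos (2*Real.pi*x/q) * (2*Real.pi/q)) x := (Real.hasDerivAt_sin _).comp x hi
  have h2 := hc.div_const 4
  have h3 : HasDerivAt (fun x : ℝ => (q - x) * (Real.pi/(4*q)) * Real.sin (2*Real.pi*x/q))
      (((-1) * (Real.pi/(4*q))) * Real.sin (2*Real.pi*x/q)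
        + (q - x) * (Real.pi/(4*q)) * (Real.cos (2*Real.pi*x/q) * (2*Real.pi/q))) x :=
    (((hasDerivAt_id x).const_sub q).mul_const (Real.pi/(4*q))).mul hs
  have := ((hasDerivAt_const x (-(1/4))).add h2).sub h3
  refine this.congr_deriv ?_
  unfold F2h
  have hpi := Real.pi_ne_zero
  field_simp
  ring

lemma F1h_q (q : ℝ) (hq : q ≠ 0) : F1h q q = 0 := by
  unfold F1h
  rw [show 2*Real.pi*q/q = 2*Real.pi by field_simp]
  simp [Real.cos_two_pi, Real.sin_two_pi]

lemma F2h_q (q : ℝ) (hq : q ≠ 0) : F2h q q = 0 := by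
  unfold F2h
  rw [show 2*Real.pi*q/q = 2*Real.pi by field_simp]
  simp [Real.sin_two_pi]

lemma g_nonpos : ∀ t ∈ Set.Icc Real.pi (2*Real.pi),
    Real.sin t + (2*Real.pi - t) * Real.cos t ≤ 0 := by
  intro t ht
  have hsin : ∀ u ∈ Set.Icc Real.pi (2*Real.pi), Real.sin u ≤ 0 := by
    intro u hu
    have h1 : 0 ≤ Real.sin (u - Real.pi) :=
      Real.sin_nonneg_of_nonneg_of_le_pi (by linarith [hu.1]) (by linarith [hu.2])
    rw [Real.sin_sub_pi] at h1; linarith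
  set g : ℝ → ℝ := fun t => Real.sin t + (2*Real.pi - t) * Real.cos t with hg
  have hd : ∀ u : ℝ, HasDerivAt g (-((2*Real.pi - u) * Real.sin u)) u := by
    intro u
    have h1 := (Real.hasDerivAt_sin u).add
      ((((hasDerivAt_id u).const_sub (2*Real.pi)).mul (Real.hasDerivAt_cos u)))
    exact h1.congr_deriv (by simp only [id_eq]; ring)
  have hmono : MonotoneOn g (Set.Icc Real.pi (2*Real.pi)) := by
    apply monotoneOn_of_deriv_nonneg (convex_Icc _ _)
      (fun u _ => ((hd u).continuousAt.continuousWithinAt))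
      (fun u hu => (hd u).differentiableAt.differentiableWithinAt)
    intro u hu
    rw [interior_Icc] at hu
    rw [(hd u).deriv]
    have := hsin u ⟨le_of_lt hu.1, le_of_lt hu.2⟩
    nlinarith [hu.2.le, this]
  have h2 := hmono ht ⟨by linarith [Real.pi_pos], le_refl _⟩ ht.2
  have h3 : g (2*Real.pi) = 0 := by simp [hg, Real.sin_two_pi]
  simp only [hg] at h2 h3
  linarith

lemma F2h_nonneg (q : ℝ) (hq : 0 < q) {x : ℝ} (hx : x ∈ Set.Icc (q/2) q) : 0 ≤ F2h q x := by
  have hq' : q ≠ 0 := ne_of_gt hq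
  have hπ := Real.pi_pos
  have ht1 : Real.pi ≤ 2*Real.pi*x/q := by
    rw [le_div_iff₀ hq]; nlinarith [hx.1]
  have ht2 : 2*Real.pi*x/q ≤ 2*Real.pi := by
    rw [div_le_iff₀ hq]; nlinarith [hx.2]
  have key := g_nonpos (2*Real.pi*x/q) ⟨ht1, ht2⟩
  have heq : F2h q x = -(Real.pi/(4*q)) *
      (Real.sin (2*Real.pi*x/q) + (2*Real.pi - 2*Real.pi*x/q) * Real.cos (2*Real.pi*x/q)) := by
    unfold F2h; field_simp; ring
  rw [heq]
  have hpos : 0 < Real.pi/(4*q) := by positivity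
  nlinarith [key, hpos]

lemma hasDerivAt_Ah (q x : ℝ) (hq : q ≠ 0) (y : ℝ) :
    HasDerivAt (Ah q x)
      (Real.cos (Real.pi*y/q)^2 * Real.cos (Real.pi*(x-y)/q)^2) y := by
  have hπ := Real.pi_ne_zero
  have i1 : HasDerivAt (fun y : ℝ => 2*Real.pi*y/q) (2*Real.pi/q) y := hasDerivAt_inner q y
  have i2 : HasDerivAt (fun y : ℝ => 2*Real.pi*(x-y)/q) (-(2*Real.pi)/q) y := by
    have : HasDerivAt (fun y : ℝ => x - y) (-1) y := by
      simpa using (hasDerivAt_id y).const_sub x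
    simpa using ((this.const_mul (2*Real.pi)).div_const q)
  have i3 : HasDerivAt (fun y : ℝ => 2*Real.pi*(2*y-x)/q) (4*Real.pi/q) y := by
    have : HasDerivAt (fun y : ℝ => 2*y - x) 2 y := by
      simpa using ((hasDerivAt_id y).const_mul 2).sub_const x
    have h2 := ((this.const_mul (2*Real.pi)).div_const q)
    exact h2.congr_deriv (by ring)
  have s1 : HasDerivAt (fun y : ℝ => Real.sin (2*Real.pi*y/q))
      (Real.cos (2*Real.pi*y/q) * (2*Real.pi/q)) y := (Real.hasDerivAt_sin _).comp y i1
  have s2 : HasDerivAt (fun y : ℝ => Real.sin (2*Real.pi*(x-y)/q))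
      (Real.cos (2*Real.pi*(x-y)/q) * (-(2*Real.pi)/q)) y := (Real.hasDerivAt_sin _).comp y i2
  have s3 : HasDerivAt (fun y : ℝ => Real.sin (2*Real.pi*(2*y-x)/q))
      (Real.cos (2*Real.pi*(2*y-x)/q) * (4*Real.pi/q)) y := (Real.hasDerivAt_sin _).comp y i3
  have hd : HasDerivAt (Ah q x)
      ((1/4) * (1 + (q/(2*Real.pi)) * (Real.cos (2*Real.pi*y/q) * (2*Real.pi/q))
        - (q/(2*Real.pi)) * (Real.cos (2*Real.pi*(x-y)/q) * (-(2*Real.pi)/q))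
        + (1/2) * Real.cos (2*Real.pi*x/q)
        + (q/(8*Real.pi)) * (Real.cos (2*Real.pi*(2*y-x)/q) * (4*Real.pi/q)))) y := by
    unfold Ah
    exact (((((hasDerivAt_id y).add (s1.const_mul _)).sub (s2.const_mul _)).add
      (((hasDerivAt_id y).div_const 2).mul_const _)).add (s3.const_mul _)).const_mul (1/4)
  have hE : (1/4) * (1 + (q/(2*Real.pi)) * (Real.cos (2*Real.pi*y/q) * (2*Real.pi/q))
        - (q/(2*Real.pi)) * (Real.cos (2*Real.pi*(x-y)/q) * (-(2*Real.pi)/q))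
        + (1/2) * Real.cos (2*Real.pi*x/q)
        + (q/(8*Real.pi)) * (Real.cos (2*Real.pi*(2*y-x)/q) * (4*Real.pi/q)))
      = Real.cos (Real.pi*y/q)^2 * Real.cos (Real.pi*(x-y)/q)^2 := by
    have e1 : 2*Real.pi*y/q = 2*(Real.pi*y/q) := by ring
    have e2 : 2*Real.pi*(x-y)/q = 2*(Real.pi*(x-y)/q) := by ring
    have e3 : 2*Real.pi*x/q = 2*(Real.pi*y/q) + 2*(Real.pi*(x-y)/q) := by field_simp; ring
    have e4 : 2*Real.pi*(2*y-x)/q = 2*(Real.pi*y/q) - 2*(Real.pi*(x-y)/q) := by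
      field_simp; ring
    rw [e1, e2, e3, e4, Real.cos_add, Real.cos_sub, Real.cos_two_mul, Real.cos_two_mul]
    field_simp
    ring
  rw [← hE]
  exact hd

lemma Ah_diff (q x : ℝ) (hq : q ≠ 0) : Ah q x (q/2) - Ah q x (x - q/2) = Fh q x := by
  have hπ := Real.pi_ne_zero
  unfold Ah Fh
  rw [show 2*Real.pi*(q/2)/q = Real.pi by field_simp]
  rw [show 2*Real.pi*(x-q/2)/q = 2*Real.pi*x/q - Real.pi by field_simp]
  rw [show 2*Real.pi*(x-(x-q/2))/q = Real.pi by field_simp; ring]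
  rw [show 2*Real.pi*(2*(q/2)-x)/q = -(2*Real.pi*x/q - 2*Real.pi) by field_simp; ring]
  rw [show 2*Real.pi*(2*(x-q/2)-x)/q = 2*Real.pi*x/q - 2*Real.pi by field_simp; ring]
  rw [Real.sin_neg, Real.sin_sub_two_pi, Real.sin_sub_pi, Real.sin_pi]
  field_simp
  ring

lemma hconv_zero (q : ℝ) (hq : 0 < q) {x : ℝ} (hx : q ≤ x) : hconv q x = 0 := by
  unfold hconv
  have : ∀ y : ℝ, hann q y * hann q (x - y) = 0 := by
    intro y
    unfold hann
    rcases lt_or_ge |y| (q/2) with h1 | h1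
    · have hy : y < q/2 := (abs_lt.mp h1).2
      have : ¬ |x - y| < q/2 := by
        rw [not_lt, le_abs]
        left; linarith
      simp [this]
    · simp [not_lt.mpr h1]
  simp [this]

lemma integrand_eq (q : ℝ) (hq : 0 < q) {x : ℝ} (hx : x ∈ Set.Icc 0 q) :
    (fun y : ℝ => hann q y * hann q (x - y)) =
      Set.indicator (Set.Ioo (x - q/2) (q/2))
        (fun y => Real.cos (Real.pi*y/q)^2 * Real.cos (Real.pi*(x-y)/q)^2) := by
  funext y
  rw [Set.indicator_apply]
  unfold hann
  by_cases h1 : |y| < q/2 <;> by_cases h2 : |x - y| < q/2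
  · have m : y ∈ Set.Ioo (x - q/2) (q/2) := by
      constructor
      · linarith [(abs_lt.mp h2).2]
      · exact (abs_lt.mp h1).2
    simp [h1, h2, m]
  · have m : y ∉ Set.Ioo (x - q/2) (q/2) := by
      intro hm
      apply h2
      rw [abs_lt]
      constructor
      · linarith [(abs_lt.mp h1).2, hx.1]
      · linarith [hm.1]
    simp [h1, h2, m]
  · have m : y ∉ Set.Ioo (x - q/2) (q/2) := by
      intro hm
      apply h1
      rw [abs_lt]
      constructor
      · linarith [hm.1, hx.1]
      · exact hm.2
    simp [h1, h2, m]
  · have m : y ∉ Set.Ioo (x - q/2) (q/2) := by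
      intro hm
      apply h1
      rw [abs_lt]
      exact ⟨by linarith [hm.1, hx.1], hm.2⟩
    simp [h1, h2, m]

lemma hconv_eq (q : ℝ) (hq : 0 < q) {x : ℝ} (hx : x ∈ Set.Icc 0 q) : hconv q x = Fh q x := by
  have hle : x - q/2 ≤ q/2 := by linarith [hx.2]
  have hcont : Continuous (fun y : ℝ => Real.cos (Real.pi*y/q)^2 * Real.cos (Real.pi*(x-y)/q)^2) := by
    fun_prop
  calc hconv q x
      = ∫ y : ℝ, Set.indicator (Set.Ioo (x - q/2) (q/2))
          (fun y => Real.cos (Real.pi*y/q)^2 * Real.cos (Real.pi*(x-y)/q)^2) y := by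
        unfold hconv; rw [integrand_eq q hq hx]
    _ = ∫ y in Set.Ioo (x - q/2) (q/2),
          Real.cos (Real.pi*y/q)^2 * Real.cos (Real.pi*(x-y)/q)^2 := by
        rw [MeasureTheory.integral_indicator measurableSet_Ioo]
    _ = ∫ y in (x - q/2)..(q/2),
          Real.cos (Real.pi*y/q)^2 * Real.cos (Real.pi*(x-y)/q)^2 := by
        rw [intervalIntegral.integral_of_le hle, MeasureTheory.integral_Ioc_eq_integral_Ioo]
    _ = Ah q x (q/2) - Ah q x (x - q/2) :=
        intervalIntegral.integral_eq_sub_of_hasDerivAt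
          (fun y _ => hasDerivAt_Ah q x (ne_of_gt hq) y)
          (hcont.intervalIntegrable _ _)
    _ = Fh q x := Ah_diff q x (ne_of_gt hq)

theorem hann_autoconv_convex_on_right (q : ℝ) (hq : 0 < q) :
    ConvexOn ℝ (Set.Icc (q / 2) q) (hconv q) ∧
      ∀ x ∈ Set.Icc (q / 2) q, 0 ≤ deriv (deriv (hconv q)) x := by
  have hq' : q ≠ 0 := ne_of_gt hq
  have hopen : IsOpen (Set.Ioo (0:ℝ) q) := isOpen_Ioo
  have hEq : ∀ x ∈ Set.Ioo (0:ℝ) q, hconv q x = Fh q x :=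
    fun x hx => hconv_eq q hq ⟨hx.1.le, hx.2.le⟩
  have hev : ∀ x ∈ Set.Ioo (0:ℝ) q, hconv q =ᶠ[nhds x] Fh q :=
    fun x hx => Filter.eventuallyEq_of_mem (hopen.mem_nhds hx) hEq
  have hD1 : ∀ x ∈ Set.Ioo (0:ℝ) q, HasDerivAt (hconv q) (F1h q x) x :=
    fun x hx => (hasDerivAt_Fh q hq' x).congr_of_eventuallyEq (hev x hx)
  have hderiv_eq : ∀ x ∈ Set.Ioo (0:ℝ) q, deriv (hconv q) x = F1h q x :=
    fun x hx => (hD1 x hx).deriv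
  have hIcc_mem : Set.Icc 0 q ∈ nhdsWithin q (Set.Iic q) := by
    rw [mem_nhdsWithin]
    exact ⟨Set.Ioi 0, isOpen_Ioi, hq, fun y hy => ⟨hy.1.le, hy.2⟩⟩
  have hIoc_mem : Set.Ioc 0 q ∈ nhdsWithin q (Set.Iic q) := by
    rw [mem_nhdsWithin]
    exact ⟨Set.Ioi 0, isOpen_Ioi, hq, fun y hy => ⟨hy.1, hy.2⟩⟩
  -- derivative of hconv at q is 0
  have hd_q : HasDerivAt (hconv q) 0 q := by
    have hL : HasDerivWithinAt (hconv q) 0 (Set.Iic q) q := by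
      have h0 : HasDerivWithinAt (Fh q) (F1h q q) (Set.Icc 0 q) q :=
        (hasDerivAt_Fh q hq' q).hasDerivWithinAt
      have h1 : HasDerivWithinAt (hconv q) (F1h q q) (Set.Icc 0 q) q :=
        h0.congr (fun y hy => hconv_eq q hq hy) (hconv_eq q hq ⟨hq.le, le_refl q⟩)
      rw [F1h_q q hq'] at h1
      exact h1.mono_of_mem_nhdsWithin hIcc_mem
    have hR : HasDerivWithinAt (hconv q) 0 (Set.Ici q) q := by
      have h0 : HasDerivWithinAt (fun _ : ℝ => (0:ℝ)) 0 (Set.Ici q) q :=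
        (hasDerivAt_const q (0:ℝ)).hasDerivWithinAt
      exact h0.congr (fun y hy => hconv_zero q hq hy) (hconv_zero q hq le_rfl)
    have := hL.union hR
    rw [Set.Iic_union_Ici] at this
    exact hasDerivWithinAt_univ.mp this
  have hDq0 : deriv (hconv q) q = 0 := hd_q.deriv
  -- second derivative nonneg
  have key2 : ∀ x ∈ Set.Icc (q/2) q, 0 ≤ deriv (deriv (hconv q)) x := by
    intro x hx
    rcases eq_or_lt_of_le hx.2 with heq | hlt
    · -- x = q
      subst heq
      have hL : HasDerivWithinAt (deriv (hconv x)) 0 (Set.Iic x) x := by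
        have h0 : HasDerivWithinAt (F1h x) (F2h x x) (Set.Ioc 0 x) x :=
          (hasDerivAt_F1h x hq' x).hasDerivWithinAt
        have h1 : HasDerivWithinAt (deriv (hconv x)) (F2h x x) (Set.Ioc 0 x) x := by
          apply h0.congr
          · intro y hy
            rcases eq_or_lt_of_le hy.2 with heq2 | h
            · subst heq2; rw [hDq0, F1h_q y hq']
            · exact hderiv_eq y ⟨hy.1, h⟩
          · rw [hDq0, F1h_q x hq']
        rw [F2h_q x hq'] at h1
        exact h1.mono_of_mem_nhdsWithin hIoc_mem
      have hR : HasDerivWithinAt (deriv (hconv x)) 0 (Set.Ici x) x := by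
        have h0 : HasDerivWithinAt (fun _ : ℝ => (0:ℝ)) 0 (Set.Ici x) x :=
          (hasDerivAt_const x (0:ℝ)).hasDerivWithinAt
        apply h0.congr
        · intro y hy
          rcases eq_or_lt_of_le (Set.mem_Ici.mp hy) with heq2 | h
          · rw [← heq2]; exact hDq0
          · have hevy : hconv x =ᶠ[nhds y] (fun _ => (0:ℝ)) :=
              Filter.eventuallyEq_of_mem (isOpen_Ioi.mem_nhds h)
                (fun z hz => hconv_zero x hq (le_of_lt hz))
            rw [hevy.deriv_eq, deriv_const]
        · exact hDq0
      have := hL.union hR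
      rw [Set.Iic_union_Ici] at this
      rw [(hasDerivWithinAt_univ.mp this).deriv]
    · -- x < q
      have hxIoo : x ∈ Set.Ioo (0:ℝ) q := ⟨by linarith [hx.1], hlt⟩
      have hev1 : deriv (hconv q) =ᶠ[nhds x] F1h q :=
        Filter.eventuallyEq_of_mem (hopen.mem_nhds hxIoo) hderiv_eq
      have h2 : HasDerivAt (deriv (hconv q)) (F2h q x) x :=
        (hasDerivAt_F1h q hq' x).congr_of_eventuallyEq hev1
      rw [h2.deriv]
      exact F2h_nonneg q hq hx
  refine ⟨?_, key2⟩
  apply convexOn_of_hasDerivWithinAt2_nonneg (f' := F1h q) (f'' := F2h q) (convex_Icc _ _)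
  · -- continuity
    have : Continuous (Fh q) := by
      unfold Fh
      fun_prop
    exact ContinuousOn.congr this.continuousOn
      (fun x hx => hconv_eq q hq ⟨by linarith [hx.1], hx.2⟩)
  · intro x hx
    rw [interior_Icc] at hx
    exact (hD1 x ⟨by linarith [hx.1], hx.2⟩).hasDerivWithinAt
  · intro x hx
    exact (hasDerivAt_F1h q hq' x).hasDerivWithinAt
  · intro x hx
    rw [interior_Icc] at hx
    exact F2h_nonneg q hq ⟨hx.1.le, hx.2.le⟩
end

section
/- Let Y ⊂ 𝕋^d be a finite set, η: Y → 𝕋^d injective, and c⁽¹⁾, c⁽²⁾: Y → ℂ with Σ_t c_t⁽¹⁾ = Σ_t c_{η(t)}⁽²⁾ = 1. Then the generalized 1-Wasserstein distance between μ₁ = Σ_{t∈Y} c_t⁽¹⁾ δ_t and μ₂ = Σ_{t∈Y} c_{η(t)}⁽²⁾ δ_{η(t)} satisfies W₁(μ₁,μ₂) ≤ √|Y| · [ (Σ_t (|c_t⁽¹⁾|² + |c_{η(t)}⁽²⁾|²) ‖t−η(t)‖_{𝕋^d}²)^{1/2} + (1/√2)(Σ_t |c_t⁽¹⁾ − c_{η(t)}⁽²⁾|²)^{1/2}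 ]. -/
open MeasureTheory

/-- The `d`-dimensional torus `(ℝ/ℤ)^d`, with the sup metric. -/
abbrev Torus (d : ℕ) := Fin d → AddCircle (1 : ℝ)

/-- Wasserstein bound for two atomic probability-like complex measures
`μ₁ = Σ_{t∈Y} c₁(t) δ_t` and `μ₂ = Σ_{t∈Y} c₂(η t) δ_{η t}`: for every real-valued
`1`-Lipschitz `f`, the pairing `|∫ f d(μ₁−μ₂)|` is bounded as claimed, hence so is
`W₁(μ₁, μ₂) = sup_f |∫ f d(μ₁−μ₂)|`. -/
theorem wasserstein_atomic_bound {d : ℕ} (Y : Finset (Torus d))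
    (η : Torus d → Torus d) (hη : Set.InjOn η Y)
    (c₁ c₂ : Torus d → ℂ)
    (h₁ : ∑ t ∈ Y, c₁ t = 1) (h₂ : ∑ t ∈ Y, c₂ (η t) = 1) :
    ∀ f : Torus d → ℝ, LipschitzWith 1 f →
      ‖∑ t ∈ Y, (c₁ t * (f t : ℂ) - c₂ (η t) * (f (η t) : ℂ))‖ ≤
        Real.sqrt Y.card *
          (Real.sqrt (∑ t ∈ Y,
              (‖c₁ t‖ ^ 2 + ‖c₂ (η t)‖ ^ 2) * dist t (η t) ^ 2)
            + 1 / Real.sqrt 2 * Real.sqrt (∑ t ∈ Y, ‖c₁ t - c₂ (η t)‖ ^ 2)) := by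
  intro f hf
  rcases Y.eq_empty_or_nonempty with rfl | ⟨t₀, ht₀⟩
  · simp at h₁
  -- torus diameter bound
  have hdist : ∀ x y : Torus d, dist x y ≤ 1 / 2 := by
    intro x y
    refine (dist_pi_le_iff (by norm_num)).2 fun i => ?_
    have := AddCircle.norm_le_half_period (p := (1 : ℝ)) (x := x i - y i) one_ne_zero
    simpa [dist_eq_norm] using this.trans (by norm_num)
  have hfd : ∀ x y : Torus d, |f x - f y| ≤ dist x y := by
    intro x y
    have := hf.dist_le_mul x y
    simpa [Real.dist_eq] using this
  have h0 : ∑ t ∈ Y, (c₁ t - c₂ (η t)) = 0 := by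
    rw [Finset.sum_sub_distrib, h₁, h₂, sub_self]
  set A : Torus d → ℂ := fun t => c₁ t * ((f t : ℂ) - (f (η t) : ℂ)) with hA
  set B : Torus d → ℂ := fun t => (c₁ t - c₂ (η t)) * ((f (η t) : ℂ) - (f (η t₀) : ℂ)) with hB
  have hsum : (∑ t ∈ Y, (c₁ t * (f t : ℂ) - c₂ (η t) * (f (η t) : ℂ)))
      = (∑ t ∈ Y, A t) + ∑ t ∈ Y, B t := by
    have key : ∀ t, c₁ t * (f t : ℂ) - c₂ (η t) * (f (η t) : ℂ)
        = A t + B t + (c₁ t - c₂ (η t)) * (f (η t₀) : ℂ) := by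
      intro t; simp only [hA, hB]; ring
    rw [Finset.sum_congr rfl fun t _ => key t, Finset.sum_add_distrib,
      Finset.sum_add_distrib, ← Finset.sum_mul, h0, zero_mul, add_zero]
  rw [hsum]
  have habs : ∀ (x y : ℝ), ‖(x : ℂ) - (y : ℂ)‖ = |x - y| := by
    intro x y
    rw [← Complex.ofReal_sub, Complex.norm_real, Real.norm_eq_abs]
  -- bound for ∑ A
  have hAbound : ‖∑ t ∈ Y, A t‖ ≤
      Real.sqrt Y.card * Real.sqrt (∑ t ∈ Y,
        (‖c₁ t‖ ^ 2 + ‖c₂ (η t)‖ ^ 2) * dist t (η t) ^ 2) := by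
    calc ‖∑ t ∈ Y, A t‖ ≤ ∑ t ∈ Y, ‖A t‖ :=
          norm_sum_le _ _
      _ ≤ ∑ t ∈ Y, ‖c₁ t‖ * dist t (η t) := by
          refine Finset.sum_le_sum fun t _ => ?_
          rw [hA, norm_mul, habs]
          exact mul_le_mul_of_nonneg_left (hfd t (η t)) (norm_nonneg _)
      _ = ∑ t ∈ Y, 1 * (‖c₁ t‖ * dist t (η t)) := by simp
      _ ≤ Real.sqrt (∑ t ∈ Y, (1:ℝ) ^ 2) *
            Real.sqrt (∑ t ∈ Y, (‖c₁ t‖ * dist t (η t)) ^ 2) :=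
          Real.sum_mul_le_sqrt_mul_sqrt _ _ _
      _ ≤ Real.sqrt Y.card * Real.sqrt (∑ t ∈ Y,
            (‖c₁ t‖ ^ 2 + ‖c₂ (η t)‖ ^ 2) * dist t (η t) ^ 2) := by
          gcongr with t ht
          · simp
          · rw [mul_pow]
            refine mul_le_mul_of_nonneg_right ?_ (sq_nonneg _)
            nlinarith [sq_nonneg (‖c₂ (η t)‖)]
  -- bound for ∑ B
  have hBbound : ‖∑ t ∈ Y, B t‖ ≤
      Real.sqrt Y.card * (1 / Real.sqrt 2 *
        Real.sqrt (∑ t ∈ Y, ‖c₁ t - c₂ (η t)‖ ^ 2)) := by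
    calc ‖∑ t ∈ Y, B t‖ ≤ ∑ t ∈ Y, ‖B t‖ :=
          norm_sum_le _ _
      _ = ∑ t ∈ Y, ‖c₁ t - c₂ (η t)‖ * |f (η t) - f (η t₀)| := by
          refine Finset.sum_congr rfl fun t _ => ?_
          rw [hB, norm_mul, habs]
      _ ≤ Real.sqrt (∑ t ∈ Y, ‖c₁ t - c₂ (η t)‖ ^ 2) *
            Real.sqrt (∑ t ∈ Y, |f (η t) - f (η t₀)| ^ 2) :=
          Real.sum_mul_le_sqrt_mul_sqrt _ _ _
      _ ≤ Real.sqrt (∑ t ∈ Y, ‖c₁ t - c₂ (η t)‖ ^ 2) *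
            Real.sqrt (∑ t ∈ Y, (1/2 : ℝ)) := by
          gcongr with t ht
          have h1 : |f (η t) - f (η t₀)| ≤ 1 / 2 :=
            (hfd _ _).trans (hdist _ _)
          nlinarith [abs_nonneg (f (η t) - f (η t₀))]
      _ = Real.sqrt Y.card * (1 / Real.sqrt 2 *
            Real.sqrt (∑ t ∈ Y, ‖c₁ t - c₂ (η t)‖ ^ 2)) := by
          rw [Finset.sum_const, nsmul_eq_mul, Real.sqrt_mul (Nat.cast_nonneg _),
            one_div, Real.sqrt_inv]
          ring
  calc ‖(∑ t ∈ Y, A t) + ∑ t ∈ Y, B t‖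
      ≤ ‖∑ t ∈ Y, A t‖ + ‖∑ t ∈ Y, B t‖ :=
        norm_add_le _ _
    _ ≤ _ := by
        rw [mul_add]
        exact add_le_add hAbound hBbound
end

section
/- Let q > 0 and define the sequence a₀ = 1, a_{k+1} = 3/(4 − 4m_k) where m_k = ((φ*φ)(a_k q) − (φ*φ)(q/2))/(a_k q − q/2) and φ is the Hann window of width q. Then a_k ∈ [1/2, 1] for all k, the sequence (a_k) is nonincreasing, and a_k → 1/2 as k → ∞. -/
open MeasureTheory Real Filter

/-- The sequence `a₀ = 1`, `a_{k+1} = 3/(4 − 4 m_k)` where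
`m_k` is the chord slope of `φ*φ` between `q/2` and `a_k q`. -/
noncomputable def aSeq (q : ℝ) : ℕ → ℝ
  | 0 => 1
  | k + 1 =>
      3 / (4 - 4 * ((hconv q (aSeq q k * q) - hconv q (q / 2)) / (aSeq q k * q - q / 2)))

lemma aux_sin_lb (x : ℝ) (hx : 0 ≤ x) : x - x ^ 3 / 6 ≤ Real.sin x := by
  have h : ∀ y : ℝ, HasDerivAt (fun t => Real.sin t - (t - t ^ 3 / 6))
      (Real.cos y - (1 - y ^ 2 / 2)) y := by
    intro y
    have h2 : HasDerivAt (fun t : ℝ => t - t ^ 3 / 6) (1 - y ^ 2 / 2) y := by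
      have h3 := (hasDerivAt_pow 3 y).div_const 6
      have := (hasDerivAt_id y).sub h3
      convert this using 1
      · rfl
      · rfl
      · rfl
      · rw [show (3:ℕ) - 1 = 2 from rfl]; push_cast; ring
    exact (Real.hasDerivAt_sin y).sub h2
  have mono : MonotoneOn (fun t => Real.sin t - (t - t ^ 3 / 6)) (Set.Ici (0:ℝ)) := by
    apply monotoneOn_of_deriv_nonneg (convex_Ici 0)
    · exact fun t _ => ((h t).differentiableAt).continuousAt.continuousWithinAt
    · exact fun t _ => ((h t).differentiableAt).differentiableWithinAt
    · intro t _
      rw [(h t).deriv]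
      nlinarith [Real.one_sub_sq_div_two_le_cos (x := t)]
  have h0 := mono (Set.self_mem_Ici) (Set.mem_Ici.mpr hx) hx
  simp at h0
  linarith

lemma trig_key (A B : ℝ) : Real.cos A ^ 2 * Real.cos B ^ 2 =
    (1 + Real.cos (2 * (A + B)) / 2 + Real.cos (2 * A) + Real.cos (2 * B)
      + Real.cos (2 * A - 2 * B) / 2) / 4 := by
  simp only [two_mul, mul_add, Real.cos_add, Real.cos_sub, Real.sin_add, Real.sin_sub]
  nlinarith [Real.sin_sq_add_cos_sq A, Real.sin_sq_add_cos_sq B]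

lemma hconv_eq_s14 (q : ℝ) (hq : 0 < q) (x : ℝ) (hx1 : q / 2 ≤ x) (hx2 : x ≤ q) :
    hconv q x = ((q - x) * (1 + Real.cos (2 * π * x / q) / 2)
      + 3 * q / (4 * π) * Real.sin (2 * π * x / q)) / 4 := by
  have hq0 : q ≠ 0 := ne_of_gt hq
  have hπ : (0:ℝ) < π := Real.pi_pos
  set g : ℝ → ℝ := fun y => Real.cos (π * y / q) ^ 2 * Real.cos (π * (x - y) / q) ^ 2 with hg
  have hpt : (fun y => hann q y * hann q (x - y))
      = Set.indicator (Set.Ioo (x - q / 2) (q / 2)) g := by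
    funext y
    rw [Set.indicator_apply]
    unfold hann
    by_cases h1 : y ∈ Set.Ioo (x - q / 2) (q / 2)
    · have hy1 := h1.1
      have hy2 := h1.2
      rw [if_pos h1, if_pos (by rw [abs_lt]; constructor <;> linarith),
        if_pos (by rw [abs_lt]; constructor <;> linarith)]
    · rw [if_neg h1]
      have h1' : ¬(x - q / 2 < y ∧ y < q / 2) := by simpa [Set.mem_Ioo] using h1
      rcases not_and_or.mp h1' with h | h
      · push_neg at h
        have hb : q / 2 ≤ |x - y| := le_trans (by linarith) (le_abs_self _)
        rw [if_neg (not_lt.mpr hb), mul_zero]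
      · push_neg at h
        have hb : q / 2 ≤ |y| := le_trans h (le_abs_self _)
        rw [if_neg (not_lt.mpr hb), zero_mul]
  have hle : x - q / 2 ≤ q / 2 := by linarith
  have step1 : hconv q x = ∫ y in (x - q/2)..(q/2), g y := by
    rw [hconv, hpt, integral_indicator measurableSet_Ioo,
      intervalIntegral.integral_of_le hle, integral_Ioc_eq_integral_Ioo]
  set F : ℝ → ℝ := fun y => (y * (1 + Real.cos (2 * π * x / q) / 2)
      + q / (2 * π) * Real.sin (2 * π * y / q)
      - q / (2 * π) * Real.sin (2 * π * (x - y) / q)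
      + q / (8 * π) * Real.sin ((4 * π * y - 2 * π * x) / q)) / 4 with hF
  have hderiv : ∀ y : ℝ, HasDerivAt F (g y) y := by
    intro y
    have d1 : HasDerivAt (fun y : ℝ => 2 * π * y / q) (2 * π / q) y := by
      simpa using ((hasDerivAt_id y).const_mul (2 * π)).div_const q
    have d2 : HasDerivAt (fun y : ℝ => 2 * π * (x - y) / q) (-(2 * π) / q) y := by
      have : HasDerivAt (fun y : ℝ => x - y) (-1) y := by
        simpa using (hasDerivAt_id y).const_sub x
      simpa using ((this.const_mul (2 * π)).div_const q)
    have d3 : HasDerivAt (fun y : ℝ => (4 * π * y - 2 * π * x) / q) (4 * π / q) y := by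
      have : HasDerivAt (fun y : ℝ => 4 * π * y - 2 * π * x) (4 * π) y := by
        simpa using ((hasDerivAt_id y).const_mul (4 * π)).sub_const (2 * π * x)
      simpa using this.div_const q
    have t1 : HasDerivAt (fun y : ℝ => y * (1 + Real.cos (2 * π * x / q) / 2))
        (1 + Real.cos (2 * π * x / q) / 2) y := by
      simpa using (hasDerivAt_id y).mul_const (1 + Real.cos (2 * π * x / q) / 2)
    have t2 := (d1.sin.const_mul (q / (2 * π)))
    have t3 := (d2.sin.const_mul (q / (2 * π)))
    have t4 := (d3.sin.const_mul (q / (8 * π)))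
    have hD := (((t1.add t2).sub t3).add t4).div_const 4
    convert hD using 1
    · rfl
    · rfl
    · rfl
    simp only [hg]
    beta_reduce
    have e1 : π * y / q + π * (x - y) / q = π * x / q := by field_simp; ring
    rw [trig_key (π * y / q) (π * (x - y) / q), e1]
    have e2 : 2 * (π * x / q) = 2 * π * x / q := by ring
    have e3 : 2 * (π * y / q) = 2 * π * y / q := by ring
    have e4 : 2 * (π * (x - y) / q) = 2 * π * (x - y) / q := by ring
    rw [e2, e3, e4]
    have e5 : 2 * π * y / q - 2 * π * (x - y) / q = (4 * π * y - 2 * π * x) / q := by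
      field_simp; ring
    rw [e5]
    have hπ' : π ≠ 0 := ne_of_gt hπ
    field_simp
    ring
  have hcont : Continuous g := by
    apply Continuous.mul <;> apply Continuous.pow <;> fun_prop
  have step2 : (∫ y in (x - q/2)..(q/2), g y) = F (q/2) - F (x - q/2) :=
    intervalIntegral.integral_eq_sub_of_hasDerivAt (fun y _ => hderiv y)
      (hcont.intervalIntegrable _ _)
  rw [step1, step2, hF]
  have hπ' : π ≠ 0 := ne_of_gt hπ
  have a1 : 2 * π * (q / 2) / q = π := by field_simp
  have a2 : 2 * π * (x - q / 2) / q = 2 * π * x / q - π := by field_simp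
  have a3 : 2 * π * (x - (x - q / 2)) / q = π := by field_simp; ring
  have a4 : (4 * π * (q / 2) - 2 * π * x) / q = 2 * π - 2 * π * x / q := by field_simp; ring
  have a5 : (4 * π * (x - q / 2) - 2 * π * x) / q = 2 * π * x / q - 2 * π := by field_simp; ring
  beta_reduce
  rw [a1, a2, a3, a4, a5]
  simp only [Real.sin_pi, Real.sin_sub, Real.sin_two_pi, Real.cos_two_pi, Real.cos_pi,
    Real.sin_sub_pi]
  ring

lemma P_bounds (s C S : ℝ) (hs0 : 0 < s) (hs2 : s ≤ 1 / 2) (hC1 : C ≤ 1) (hCm1 : -1 ≤ C)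
    (hClb : 1 - (2 * π * s) ^ 2 / 2 ≤ C) (hSub : S < 2 * π * s)
    (hSlb : 2 * π * s - (2 * π * s) ^ 3 / 6 ≤ S) (hSpos : 0 ≤ S) :
    0 < π + 4 * π * s - 2 * π * (1 / 2 - s) * C - 3 * S ∧
    π + 4 * π * s - 2 * π * (1 / 2 - s) * C - 3 * S ≤ 8 * π * s ∧
    π + 4 * π * s - 2 * π * (1 / 2 - s) * C - 3 * S ≤ 2 * π ^ 3 * s ^ 2 := by
  have hπ : (0:ℝ) < π := Real.pi_pos
  have hH : 0 ≤ π * (1 / 2 - s) * (1 - C) :=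
    mul_nonneg (mul_nonneg hπ.le (by linarith)) (by linarith)
  have hG1 : 0 < π + 4 * π * s - 2 * π * (1 / 2 - s) * C - 3 * S := by nlinarith
  have hH2 : 0 ≤ π * (1 / 2 - s) * (C - (1 - 2 * π ^ 2 * s ^ 2)) :=
    mul_nonneg (mul_nonneg hπ.le (by linarith)) (by nlinarith)
  have hG3 : π + 4 * π * s - 2 * π * (1 / 2 - s) * C - 3 * S ≤ 2 * π ^ 3 * s ^ 2 := by
    nlinarith
  refine ⟨hG1, ?_, hG3⟩
  rcases le_or_gt s (2 / 5) with h | h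
  · have hπ315 : π < 3.15 := Real.pi_lt_d2
    nlinarith
  · nlinarith

lemma hconv_half (q : ℝ) (hq : 0 < q) : hconv q (q / 2) = q / 16 := by
  rw [hconv_eq_s14 q hq (q / 2) le_rfl (by linarith)]
  have hq0 : q ≠ 0 := ne_of_gt hq
  have a1 : 2 * π * (q / 2) / q = π := by field_simp
  rw [a1, Real.sin_pi, Real.cos_pi]
  ring

set_option maxHeartbeats 800000 in
lemma step_lemma (q : ℝ) (hq : 0 < q) (a : ℝ) (ha1 : 1 / 2 < a) (ha2 : a ≤ 1) :
    (1 / 2 < 3 / (4 - 4 * ((hconv q (a * q) - hconv q (q / 2)) / (a * q - q / 2))) ∧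
     3 / (4 - 4 * ((hconv q (a * q) - hconv q (q / 2)) / (a * q - q / 2))) ≤ 1) ∧
    3 / (4 - 4 * ((hconv q (a * q) - hconv q (q / 2)) / (a * q - q / 2))) - 1 / 2
      ≤ π ^ 2 / 16 * (a - 1 / 2) := by
  have hq0 : q ≠ 0 := ne_of_gt hq
  have hπ : (0:ℝ) < π := Real.pi_pos
  have hπ0 : π ≠ 0 := ne_of_gt hπ
  obtain ⟨s, hs⟩ : ∃ s, a - 1 / 2 = s := ⟨_, rfl⟩
  have hs0 : 0 < s := by linarith
  have hs2 : s ≤ 1 / 2 := by linarith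
  have ha : a = s + 1 / 2 := by linarith
  obtain ⟨C, hCdef⟩ : ∃ C, Real.cos (2 * π * s) = C := ⟨_, rfl⟩
  obtain ⟨S, hSdef⟩ : ∃ S, Real.sin (2 * π * s) = S := ⟨_, rfl⟩
  have hφ0 : 0 < 2 * π * s := by positivity
  have hφπ : 2 * π * s ≤ π := by nlinarith
  obtain ⟨hG1, hG2, hG3⟩ := P_bounds s C S hs0 hs2
    (hCdef ▸ Real.cos_le_one _) (hCdef ▸ Real.neg_one_le_cos _)
    (hCdef ▸ Real.one_sub_sq_div_two_le_cos) (hSdef ▸ Real.sin_lt hφ0)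
    (hSdef ▸ aux_sin_lb _ hφ0.le)
    (hSdef ▸ Real.sin_nonneg_of_nonneg_of_le_pi hφ0.le hφπ)
  set m : ℝ := (hconv q (a * q) - hconv q (q / 2)) / (a * q - q / 2) with hm
  have harg : 2 * π * (a * q) / q = 2 * π * s + π := by rw [ha]; field_simp
  have hval : hconv q (a * q) = ((1 / 2 - s) * q * (1 - C / 2) - 3 * q / (4 * π) * S) / 4 := by
    rw [hconv_eq_s14 q hq (a * q) (by nlinarith) (by nlinarith), harg, Real.cos_add_pi,
      Real.sin_add_pi, hCdef, hSdef, ha]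
    ring
  have hden : a * q - q / 2 = s * q := by rw [ha]; ring
  have hmden : (0:ℝ) < 16 * π * s := by positivity
  have hmP : m = ((π + 4 * π * s - 2 * π * (1 / 2 - s) * C - 3 * S) - 8 * π * s)
      / (16 * π * s) := by
    rw [hm, hval, hconv_half q hq, hden]
    field_simp
    ring
  have hm1 : -(1 / 2) < m := by rw [hmP, lt_div_iff₀ hmden]; nlinarith
  have hm2 : m ≤ 0 := by rw [hmP, div_le_iff₀ hmden]; nlinarith
  have h12m : 1 + 2 * m = (π + 4 * π * s - 2 * π * (1 / 2 - s) * C - 3 * S) / (8 * π * s) := by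
    rw [hmP]; field_simp; ring
  have hm3 : 1 + 2 * m ≤ π ^ 2 * s / 4 := by
    rw [h12m, div_le_iff₀ (by positivity : (0:ℝ) < 8 * π * s)]
    calc π + 4 * π * s - 2 * π * (1 / 2 - s) * C - 3 * S ≤ 2 * π ^ 3 * s ^ 2 := hG3
      _ = π ^ 2 * s / 4 * (8 * π * s) := by ring
  have hD0 : (0:ℝ) < 4 - 4 * m := by linarith
  have hD4 : (4:ℝ) ≤ 4 - 4 * m := by linarith
  have hD6 : 4 - 4 * m < 6 := by linarith
  refine ⟨⟨?_, ?_⟩, ?_⟩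
  · have h6 : (3:ℝ) / 6 < 3 / (4 - 4 * m) := by
      apply div_lt_div_of_pos_left (by norm_num) hD0 hD6
    linarith
  · rw [div_le_one hD0]; linarith
  · have he : 3 / (4 - 4 * m) - 1 / 2 = (1 + 2 * m) / (4 - 4 * m) := by
      have h1m : (1:ℝ) - m ≠ 0 := (by linarith : (0:ℝ) < 1 - m).ne'
      field_simp; ring
    rw [he]
    have h1 : (1 + 2 * m) / (4 - 4 * m) ≤ (π ^ 2 * s / 4) / 4 :=
      div_le_div₀ (by positivity) hm3 (by norm_num) hD4
    calc (1 + 2 * m) / (4 - 4 * m) ≤ (π ^ 2 * s / 4) / 4 := h1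
      _ = π ^ 2 / 16 * (a - 1 / 2) := by rw [ha]; ring

theorem aSeq_tendsto_half (q : ℝ) (hq : 0 < q) :
    (∀ k : ℕ, aSeq q k ∈ Set.Icc (1 / 2 : ℝ) 1) ∧
    Antitone (aSeq q) ∧
    Tendsto (aSeq q) atTop (nhds (1 / 2)) := by
  have hρ0 : (0:ℝ) ≤ π ^ 2 / 16 := by positivity
  have hρ1 : π ^ 2 / 16 < 1 := by nlinarith [Real.pi_lt_d2, Real.pi_pos]
  have hrec : ∀ k : ℕ, aSeq q (k + 1)
      = 3 / (4 - 4 * ((hconv q (aSeq q k * q) - hconv q (q / 2)) / (aSeq q k * q - q / 2))) :=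
    fun k => rfl
  have hstep : ∀ k : ℕ, 1 / 2 < aSeq q k ∧ aSeq q k ≤ 1 →
      (1 / 2 < aSeq q (k + 1) ∧ aSeq q (k + 1) ≤ 1) ∧
      aSeq q (k + 1) - 1 / 2 ≤ π ^ 2 / 16 * (aSeq q k - 1 / 2) := by
    intro k hk
    have h := step_lemma q hq (aSeq q k) hk.1 hk.2
    rw [hrec k]
    exact h
  have hmem : ∀ k : ℕ, 1 / 2 < aSeq q k ∧ aSeq q k ≤ 1 := by
    intro k
    induction k with
    | zero => constructor <;> norm_num [aSeq]
    | succ n ih => exact (hstep n ih).1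
  have hcontr : ∀ k : ℕ, aSeq q (k + 1) - 1 / 2 ≤ π ^ 2 / 16 * (aSeq q k - 1 / 2) :=
    fun k => (hstep k (hmem k)).2
  have hanti : Antitone (aSeq q) := by
    apply antitone_nat_of_succ_le
    intro k
    have h := hcontr k
    have h0 := (hmem k).1
    nlinarith
  have hg : ∀ k : ℕ, aSeq q k - 1 / 2 ≤ (π ^ 2 / 16) ^ k * (1 / 2) := by
    intro k
    induction k with
    | zero => norm_num [aSeq]
    | succ n ih =>
      have h1 := hcontr n
      have h2 := mul_le_mul_of_nonneg_left ih hρ0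
      rw [pow_succ]
      nlinarith
  refine ⟨fun k => Set.mem_Icc.mpr ⟨(hmem k).1.le, (hmem k).2⟩, hanti, ?_⟩
  have hub : Tendsto (fun k : ℕ => 1 / 2 + (π ^ 2 / 16) ^ k * (1 / 2)) atTop (nhds (1 / 2)) := by
    have h1 := (tendsto_pow_atTop_nhds_zero_of_lt_one hρ0 hρ1).mul_const (1 / 2 : ℝ)
    have h2 := h1.const_add (1 / 2 : ℝ)
    simpa using h2
  apply tendsto_of_tendsto_of_tendsto_of_le_of_le tendsto_const_nhds hub
  · intro k; exact (hmem k).1.le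
  · intro k; linarith [hg k]
end
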